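/- Let X be a fixed finite set and let P_N, N >= 1, be an S-unstable FOES model sequence on X^N. Then for every epsilon with 0 < epsilon < 1, the probability P_N(M_{epsilon,N}) of the epsilon-modal set converges to 1 as N tends to infinity. (Theorem 2) -/

import Mathlib

/-- The log-ratio of extremal probabilities of a positive function on a finite nonempty type. -/
noncomputable def LREP {S : Type*} [Fintype S] [Nonempty S] (P : S → ℝ) : ℝ :=
  Real.log (Finset.univ.sup' Finset.univ_nonempty P / Finset.univ.inf' Finset.univ_nonempty P)

open scoped Classical in
/-- The ε-modal set of a model `P` on `Fin N → X`. -/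
noncomputable def modalSet {X : Type*} [Fintype X] [Nonempty X] {N : ℕ}
    (P : (Fin N → X) → ℝ) (ε : ℝ) : Finset (Fin N → X) :=
  Finset.univ.filter fun x =>
    Real.log (P x) >
      (1 - ε) * Finset.univ.sup' Finset.univ_nonempty (fun y => Real.log (P y)) +
        ε * Finset.univ.inf' Finset.univ_nonempty (fun y => Real.log (P y))

open Finset Filter Real

/-- Theorem 2: an S-unstable FOES model sequence puts asymptotically all mass
on any ε-modal set. -/
theorem theorem2 {X : Type*} [Fintype X] [Nonempty X]
    (P : ∀ N : ℕ, (Fin N → X) → ℝ)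
    (hpos : ∀ N : ℕ, 1 ≤ N → ∀ x, 0 < P N x)
    (hsum : ∀ N : ℕ, 1 ≤ N → ∑ x, P N x = 1)
    (hunstable : Filter.Tendsto (fun N : ℕ => LREP (P N) / (N : ℝ))
      Filter.atTop Filter.atTop)
    {ε : ℝ} (hε0 : 0 < ε) (hε1 : ε < 1) :
    Filter.Tendsto (fun N : ℕ => ∑ x ∈ modalSet (P N) ε, P N x)
      Filter.atTop (nhds 1) := by
  classical
  set c : ℝ := (Fintype.card X : ℝ) with hc
  have hc1 : (1:ℝ) ≤ c := by
    have := Fintype.card_pos (α := X); rw [hc]; exact_mod_cast this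
  set g : ℕ → ℝ := fun N => ∑ x ∈ (univ \ modalSet (P N) ε), P N x with hg
  -- key bound
  have hbound : ∀ N : ℕ, 1 ≤ N → g N ≤ Real.exp ((N : ℝ) * Real.log c - ε * LREP (P N)) := by
    intro N hN
    have hp := hpos N hN
    set f : (Fin N → X) → ℝ := fun y => Real.log (P N y) with hf
    set M : ℝ := Finset.univ.sup' Finset.univ_nonempty f with hM
    set m : ℝ := Finset.univ.inf' Finset.univ_nonempty f with hm
    -- sup'/inf' of P vs log
    obtain ⟨xM, -, hxM⟩ := Finset.exists_mem_eq_sup' (Finset.univ_nonempty) (P N)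
    obtain ⟨xm, -, hxm⟩ := Finset.exists_mem_eq_inf' (Finset.univ_nonempty) (P N)
    have hMlog : M = Real.log (P N xM) := by
      apply le_antisymm
      · apply Finset.sup'_le
        intro y _
        exact Real.log_le_log (hp y) (hxM ▸ Finset.le_sup' (P N) (mem_univ y))
      · exact Finset.le_sup' f (mem_univ xM)
    have hmlog : m = Real.log (P N xm) := by
      apply le_antisymm
      · exact Finset.inf'_le f (mem_univ xm)
      · apply Finset.le_inf'
        intro y _
        exact Real.log_le_log (hp xm) (hxm ▸ Finset.inf'_le (P N) (mem_univ y))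
    have hL : LREP (P N) = M - m := by
      rw [LREP, hxM, hxm, Real.log_div (hp xM).ne' (hp xm).ne', hMlog, hmlog]
    have hM0 : M ≤ 0 := by
      rw [hMlog]
      apply Real.log_nonpos (hp xM).le
      calc P N xM ≤ ∑ x, P N x := Finset.single_le_sum (fun y _ => (hp y).le) (mem_univ xM)
        _ = 1 := hsum N hN
    have hmM : m ≤ M := by
      rw [hMlog]
      exact le_trans (Finset.inf'_le f (mem_univ xM)) (le_of_eq rfl)
    set T : ℝ := (1 - ε) * M + ε * m with hT
    have hstep : ∀ x ∈ univ \ modalSet (P N) ε, P N x ≤ Real.exp T := by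
      intro x hx
      rw [Finset.mem_sdiff, modalSet, Finset.mem_filter] at hx
      have hle : f x ≤ T := not_lt.mp (fun h => hx.2 ⟨mem_univ x, h⟩)
      calc P N x = Real.exp (f x) := (Real.exp_log (hp x)).symm
        _ ≤ Real.exp T := Real.exp_le_exp.mpr hle
    have hcard : ((univ \ modalSet (P N) ε).card : ℝ) ≤ c ^ N := by
      have : (univ \ modalSet (P N) ε).card ≤ Fintype.card (Fin N → X) :=
        Finset.card_le_card (Finset.subset_univ _)
      calc ((univ \ modalSet (P N) ε).card : ℝ) ≤ (Fintype.card (Fin N → X) : ℝ) := by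
            exact_mod_cast this
        _ = c ^ N := by rw [hc]; push_cast [Fintype.card_fun, Fintype.card_fin]; ring
    have h1 : g N ≤ ((univ \ modalSet (P N) ε).card : ℝ) * Real.exp T := by
      have := Finset.sum_le_card_nsmul (univ \ modalSet (P N) ε) (P N) (Real.exp T) hstep
      rw [nsmul_eq_mul] at this
      exact this
    have h2 : g N ≤ c ^ N * Real.exp T :=
      h1.trans (mul_le_mul_of_nonneg_right hcard (Real.exp_pos T).le)
    have hcpow : c ^ N = Real.exp ((N : ℝ) * Real.log c) := by
      rw [← Real.log_pow, Real.exp_log (by positivity)]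
    have hTle : T ≤ -ε * LREP (P N) := by
      rw [hL, hT]
      nlinarith [hM0, hmM]
    calc g N ≤ c ^ N * Real.exp T := h2
      _ = Real.exp ((N : ℝ) * Real.log c + T) := by rw [hcpow, ← Real.exp_add]
      _ ≤ Real.exp ((N : ℝ) * Real.log c - ε * LREP (P N)) := by
          apply Real.exp_le_exp.mpr; linarith
  -- the exponent tends to -∞
  have hexp : Tendsto (fun N : ℕ => (N : ℝ) * Real.log c - ε * LREP (P N)) atTop atBot := by
    have h1 : Tendsto (fun N : ℕ => Real.log c - ε * (LREP (P N) / (N : ℝ))) atTop atBot := by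
      have h1' := hunstable.const_mul_atTop hε0
      have h2' : Tendsto (fun N : ℕ => Real.log c + -(ε * (LREP (P N) / (N : ℝ)))) atTop atBot :=
        tendsto_atBot_add_const_left atTop (Real.log c) (tendsto_neg_atTop_atBot.comp h1')
      exact h2'.congr (fun N => by ring)
    have h2 : Tendsto (fun N : ℕ => (N : ℝ)) atTop atTop := tendsto_natCast_atTop_atTop
    have h3 := Tendsto.atTop_mul_atBot₀ h2 h1
    apply h3.congr'
    filter_upwards [eventually_ge_atTop 1] with N hN
    have hN0 : (N : ℝ) ≠ 0 := by positivity
    field_simp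
  have hg0 : Tendsto g atTop (nhds 0) := by
    apply tendsto_of_tendsto_of_tendsto_of_le_of_le' tendsto_const_nhds
      (Real.tendsto_exp_atBot.comp hexp)
    · filter_upwards [eventually_ge_atTop 1] with N hN
      exact Finset.sum_nonneg fun x _ => (hpos N hN x).le
    · filter_upwards [eventually_ge_atTop 1] with N hN
      exact hbound N hN
  have heq : (fun N : ℕ => ∑ x ∈ modalSet (P N) ε, P N x) =ᶠ[atTop] fun N => 1 - g N := by
    filter_upwards [eventually_ge_atTop 1] with N hN
    have := Finset.sum_sdiff (f := P N) (Finset.subset_univ (modalSet (P N) ε))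
    rw [hsum N hN] at this
    linarith [this]
  rw [Filter.tendsto_congr' heq]
  have := tendsto_const_nhds (x := (1:ℝ)) (f := atTop (α := ℕ)) |>.sub hg0
  simpa using this
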